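/- With c, Γ, R, Ric, s and the Weyl components W defined from the Heisenberg frame as in the context, the following six equations hold: W 1 2 1 2 + 2·W 1 2 3 4 + W 3 4 3 4 = 0; W 1 3 1 3 − 2·W 1 3 2 4 + W 2 4 2 4 = 0; W 1 4 1 4 + 2·W 1 4 2 3 + W 2 3 2 3 = 0; W 1 2 1 3 − W 1 2 2 4 + W 3 4 1 3 − W 3 4 2 4 = 0; W 1 2 1 4 + W 1 2 2 3 + W 3 4 1 4 + W 3 4 2 3 = 0; W 1 3 1 4 + W 1 3 2 3 − W 2 4 1 4 − W 2 4 2 3 = 0. (These equations express the anti-self-duality condition W⁻₋ = 0 of the real slice of the Ren–Wang spacetime, with the orientation making θ¹∧θ²∧θ⁴∧θ³ positive.) -/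
import Mathlib


open Finset

/-- Commutation coefficients of the standard frame of the 5-dimensional real
Heisenberg group: the only nonzero ones are `c 1 2 0 = 2`, `c 2 1 0 = −2`,
`c 4 3 0 = 2`, `c 3 4 0 = −2`. -/
def heisC (i j k : Fin 5) : ℝ :=
  if i = 1 ∧ j = 2 ∧ k = 0 then 2
  else if i = 2 ∧ j = 1 ∧ k = 0 then -2
  else if i = 4 ∧ j = 3 ∧ k = 0 then 2
  else if i = 3 ∧ j = 4 ∧ k = 0 then -2
  else 0

/-- Christoffel symbols `Γ k i j = ½(c k j i + c k i j + c i j k)`. -/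
noncomputable def heisGamma (k i j : Fin 5) : ℝ :=
  (1 / 2) * (heisC k j i + heisC k i j + heisC i j k)

/-- Curvature components
`R l k i j = Σ_m (Γ m j k·Γ l i m − Γ m i k·Γ l j m) − Σ_m c i j m·Γ l m k`. -/
noncomputable def heisR (l k i j : Fin 5) : ℝ :=
  (∑ m : Fin 5, (heisGamma m j k * heisGamma l i m - heisGamma m i k * heisGamma l j m))
    - ∑ m : Fin 5, heisC i j m * heisGamma l m k

/-- Ricci tensor `Ric i j = Σ_k R i k j k`. -/
noncomputable def heisRic (i j : Fin 5) : ℝ := ∑ k : Fin 5, heisR i k j k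

/-- Scalar curvature. -/
noncomputable def heisS : ℝ := ∑ i : Fin 5, heisRic i i

/-- Kronecker delta on `Fin 5`. -/
def heisDelta (i j : Fin 5) : ℝ := if i = j then 1 else 0

/-- Weyl components
`W i j k l = R i j k l + ⅓(Ric j k·δ i l + Ric i l·δ j k − Ric i k·δ j l − Ric j l·δ i k)
+ (s/12)(δ i k·δ j l − δ i l·δ j k)`. -/
noncomputable def heisW (i j k l : Fin 5) : ℝ :=
  heisR i j k l
    + (1 / 3) * (heisRic j k * heisDelta i l + heisRic i l * heisDelta j k
        - heisRic i k * heisDelta j l - heisRic j l * heisDelta i k)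
    + (heisS / 12) * (heisDelta i k * heisDelta j l - heisDelta i l * heisDelta j k)


def zC (i j k : Fin 5) : ℤ :=
  if i = 1 ∧ j = 2 ∧ k = 0 then 2
  else if i = 2 ∧ j = 1 ∧ k = 0 then -2
  else if i = 4 ∧ j = 3 ∧ k = 0 then 2
  else if i = 3 ∧ j = 4 ∧ k = 0 then -2
  else 0

/-- `2·Γ`. -/
def zGamma (k i j : Fin 5) : ℤ := zC k j i + zC k i j + zC i j k

/-- `4·R`. -/
def zR (l k i j : Fin 5) : ℤ :=
  (∑ m : Fin 5, (zGamma m j k * zGamma l i m - zGamma m i k * zGamma l j m))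
    - ∑ m : Fin 5, 2 * zC i j m * zGamma l m k

/-- `4·Ric`. -/
def zRic (i j : Fin 5) : ℤ := ∑ k : Fin 5, zR i k j k

/-- `4·s`. -/
def zS : ℤ := ∑ i : Fin 5, zRic i i

def zDelta (i j : Fin 5) : ℤ := if i = j then 1 else 0

/-- `48·W`. -/
def zW (i j k l : Fin 5) : ℤ :=
  12 * zR i j k l
    + 4 * (zRic j k * zDelta i l + zRic i l * zDelta j k
        - zRic i k * zDelta j l - zRic j l * zDelta i k)
    + zS * (zDelta i k * zDelta j l - zDelta i l * zDelta j k)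

lemma castC (i j k : Fin 5) : ((zC i j k : ℤ) : ℝ) = heisC i j k := by
  unfold zC heisC; split_ifs <;> norm_num

lemma castGamma (k i j : Fin 5) : ((zGamma k i j : ℤ) : ℝ) = 2 * heisGamma k i j := by
  unfold zGamma heisGamma; push_cast [castC]; ring

lemma castR (l k i j : Fin 5) : ((zR l k i j : ℤ) : ℝ) = 4 * heisR l k i j := by
  unfold zR heisR
  push_cast [castGamma, castC]
  rw [mul_sub, Finset.mul_sum, Finset.mul_sum]
  congr 1 <;> (apply Finset.sum_congr rfl; intro m _; ring)

lemma castRic (i j : Fin 5) : ((zRic i j : ℤ) : ℝ) = 4 * heisRic i j := by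
  unfold zRic heisRic
  push_cast [castR]
  rw [Finset.mul_sum]

lemma castS : ((zS : ℤ) : ℝ) = 4 * heisS := by
  unfold zS heisS
  push_cast [castRic]
  rw [Finset.mul_sum]

lemma castDelta (i j : Fin 5) : ((zDelta i j : ℤ) : ℝ) = heisDelta i j := by
  unfold zDelta heisDelta; split_ifs <;> norm_num

lemma castW (i j k l : Fin 5) : ((zW i j k l : ℤ) : ℝ) = 48 * heisW i j k l := by
  unfold zW heisW
  push_cast [castR, castRic, castS, castDelta]
  ring

/-- The anti-self-duality condition `W⁻₋ = 0` of the real slice of the Ren–Wang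
spacetime (orientation making `θ¹∧θ²∧θ⁴∧θ³` positive): six component equations. -/
theorem heisenberg_weyl_anti_self_dual :
    heisW 1 2 1 2 + 2 * heisW 1 2 3 4 + heisW 3 4 3 4 = 0 ∧
    heisW 1 3 1 3 - 2 * heisW 1 3 2 4 + heisW 2 4 2 4 = 0 ∧
    heisW 1 4 1 4 + 2 * heisW 1 4 2 3 + heisW 2 3 2 3 = 0 ∧
    heisW 1 2 1 3 - heisW 1 2 2 4 + heisW 3 4 1 3 - heisW 3 4 2 4 = 0 ∧
    heisW 1 2 1 4 + heisW 1 2 2 3 + heisW 3 4 1 4 + heisW 3 4 2 3 = 0 ∧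
    heisW 1 3 1 4 + heisW 1 3 2 3 - heisW 2 4 1 4 - heisW 2 4 2 3 = 0 := by
  refine ⟨?_, ?_, ?_, ?_, ?_, ?_⟩
  · have h : (zW 1 2 1 2 + 2 * zW 1 2 3 4 + zW 3 4 3 4 : ℤ) = 0 := by decide
    have h2 := congrArg (fun q : ℤ => (q : ℝ)) h
    push_cast [castW] at h2
    linarith [h2]
  · have h : (zW 1 3 1 3 - 2 * zW 1 3 2 4 + zW 2 4 2 4 : ℤ) = 0 := by decide
    have h2 := congrArg (fun q : ℤ => (q : ℝ)) h
    push_cast [castW] at h2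
    linarith [h2]
  · have h : (zW 1 4 1 4 + 2 * zW 1 4 2 3 + zW 2 3 2 3 : ℤ) = 0 := by decide
    have h2 := congrArg (fun q : ℤ => (q : ℝ)) h
    push_cast [castW] at h2
    linarith [h2]
  · have h : (zW 1 2 1 3 - zW 1 2 2 4 + zW 3 4 1 3 - zW 3 4 2 4 : ℤ) = 0 := by decide
    have h2 := congrArg (fun q : ℤ => (q : ℝ)) h
    push_cast [castW] at h2
    linarith [h2]
  · have h : (zW 1 2 1 4 + zW 1 2 2 3 + zW 3 4 1 4 + zW 3 4 2 3 : ℤ) = 0 := by decide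
    have h2 := congrArg (fun q : ℤ => (q : ℝ)) h
    push_cast [castW] at h2
    linarith [h2]
  · have h : (zW 1 3 1 4 + zW 1 3 2 3 - zW 2 4 1 4 - zW 2 4 2 3 : ℤ) = 0 := by decide
    have h2 := congrArg (fun q : ℤ => (q : ℝ)) h
    push_cast [castW] at h2
    linarith [h2]
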